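/- arXiv:2311.06490 — 2 statements merged into one kernel-verified Lean document; each statement's English description precedes it below -/
import Mathlib

section
/- If a graph G of order n has a perfect matching and ν(G) ≥ γ_h(G), then γ_{rh}(G) ≤ 2n·(ln(δ_h + 1) + 1)/(δ_h + 1). -/
open Finset

noncomputable section
open scoped Classical

variable {n : ℕ}

/-- The set of vertices at distance exactly 2 from `i`. -/
def N2 (G : SimpleGraph (Fin n)) (i : Fin n) : Finset (Fin n) :=
  Finset.univ.filter (fun j => G.dist i j = 2)

/-- The neighborhood of `i`. -/
def Nbr (G : SimpleGraph (Fin n)) (i : Fin n) : Finset (Fin n) :=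
  Finset.univ.filter (fun j => G.Adj i j)

/-- Hop degree of a vertex. -/
def hopDeg (G : SimpleGraph (Fin n)) (i : Fin n) : ℕ := (N2 G i).card

/-- Minimum hop degree. -/
def minHopDeg (G : SimpleGraph (Fin n)) : ℕ := ⨅ i, hopDeg G i

/-- Minimum degree. -/
def minDeg (G : SimpleGraph (Fin n)) : ℕ := ⨅ i, (Nbr G i).card

def IsHopDomSet (G : SimpleGraph (Fin n)) (S : Finset (Fin n)) : Prop :=
  ∀ u, u ∉ S → ∃ v ∈ S, G.dist u v = 2

def IsTwoStepDomSet (G : SimpleGraph (Fin n)) (S : Finset (Fin n)) : Prop :=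
  ∀ u : Fin n, ∃ v ∈ S, G.dist u v = 2

def IsRestrainedHopDomSet (G : SimpleGraph (Fin n)) (S : Finset (Fin n)) : Prop :=
  IsHopDomSet G S ∧ ∀ u, u ∉ S → ∃ v, v ∉ S ∧ G.Adj u v

def IsTotalRestrainedHopDomSet (G : SimpleGraph (Fin n)) (S : Finset (Fin n)) : Prop :=
  IsTwoStepDomSet G S ∧ ∀ u, u ∉ S → ∃ v, v ∉ S ∧ G.Adj u v

def IsTwoStepRestrainedDomSet (G : SimpleGraph (Fin n)) (S : Finset (Fin n)) : Prop :=
  IsHopDomSet G S ∧ ∀ u, u ∉ S → ∃ v, v ∉ S ∧ G.dist u v = 2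

def IsTotalTwoStepRestrainedDomSet (G : SimpleGraph (Fin n)) (S : Finset (Fin n)) : Prop :=
  IsTwoStepDomSet G S ∧ ∀ u, u ∉ S → ∃ v, v ∉ S ∧ G.dist u v = 2

def hopDomNum (G : SimpleGraph (Fin n)) : ℕ :=
  sInf {k | ∃ S : Finset (Fin n), IsHopDomSet G S ∧ S.card = k}

def twoStepDomNum (G : SimpleGraph (Fin n)) : ℕ :=
  sInf {k | ∃ S : Finset (Fin n), IsTwoStepDomSet G S ∧ S.card = k}

def rhDomNum (G : SimpleGraph (Fin n)) : ℕ :=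
  sInf {k | ∃ S : Finset (Fin n), IsRestrainedHopDomSet G S ∧ S.card = k}

def trhDomNum (G : SimpleGraph (Fin n)) : ℕ :=
  sInf {k | ∃ S : Finset (Fin n), IsTotalRestrainedHopDomSet G S ∧ S.card = k}

def tsrDomNum (G : SimpleGraph (Fin n)) : ℕ :=
  sInf {k | ∃ S : Finset (Fin n), IsTwoStepRestrainedDomSet G S ∧ S.card = k}

def ttsrDomNum (G : SimpleGraph (Fin n)) : ℕ :=
  sInf {k | ∃ S : Finset (Fin n), IsTotalTwoStepRestrainedDomSet G S ∧ S.card = k}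

/-- The graph `Dist(G;2)` joining vertices at distance exactly 2 in `G`. -/
def dist2Graph (G : SimpleGraph (Fin n)) : SimpleGraph (Fin n) where
  Adj u v := u ≠ v ∧ G.dist u v = 2
  symm := by
    constructor
    intro u v h
    exact ⟨h.1.symm, by rw [SimpleGraph.dist_comm]; exact h.2⟩
  loopless := ⟨fun v h => h.1 rfl⟩

def domNum (H : SimpleGraph (Fin n)) : ℕ :=
  sInf {k | ∃ S : Finset (Fin n), (∀ u, u ∉ S → ∃ v ∈ S, H.Adj u v) ∧ S.card = k}

def totalDomNum (H : SimpleGraph (Fin n)) : ℕ :=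
  sInf {k | ∃ S : Finset (Fin n), (∀ u : Fin n, ∃ v ∈ S, H.Adj u v) ∧ S.card = k}

/-- Matching number: maximum number of edges in a matching. -/
def matchingNum (G : SimpleGraph (Fin n)) : ℕ :=
  sSup {k | ∃ M : SimpleGraph.Subgraph G, M.IsMatching ∧ M.edgeSet.ncard = k}

/-- A hop matching: a set of paths of length two, no two of which share an end vertex. -/
def IsHopMatching (G : SimpleGraph (Fin n)) (H : Finset (Fin n × Fin n × Fin n)) : Prop :=
  (∀ t ∈ H, G.Adj t.1 t.2.1 ∧ G.Adj t.2.1 t.2.2 ∧ t.1 ≠ t.2.2) ∧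
  ∀ t ∈ H, ∀ t' ∈ H, t ≠ t' →
    t.1 ≠ t'.1 ∧ t.1 ≠ t'.2.2 ∧ t.2.2 ≠ t'.1 ∧ t.2.2 ≠ t'.2.2

/-- Hop matching number. -/
def hopMatchingNum (G : SimpleGraph (Fin n)) : ℕ :=
  sSup {k | ∃ H : Finset (Fin n × Fin n × Fin n), IsHopMatching G H ∧ H.card = k}

def frh (G : SimpleGraph (Fin n)) (p : Fin n → ℝ) : ℝ :=
  (∑ i, p i) + (∑ i, (1 - p i) * ∏ j ∈ N2 G i, (1 - p j)) +
  ∑ i, (1 - p i) * (1 - (1 - p i) * ∏ j ∈ N2 G i, (1 - p j)) *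
    ∏ j ∈ Nbr G i, (p j + (1 - p j) * ∏ k ∈ N2 G j, (1 - p k))

def f2sr (G : SimpleGraph (Fin n)) (p : Fin n → ℝ) : ℝ :=
  (∑ i, p i) + (∑ i, (1 - p i) * ∏ j ∈ N2 G i, (1 - p j)) +
  ∑ i, (1 - p i) * (1 - (1 - p i) * ∏ j ∈ N2 G i, (1 - p j)) *
    ∏ j ∈ N2 G i, (p j + (1 - p j) * ∏ k ∈ N2 G j, (1 - p k))

def ZSet (G : SimpleGraph (Fin n)) (X : Finset (Fin n)) : Finset (Fin n) :=
  Finset.univ.filter (fun i => i ∉ X ∧ N2 G i ∩ X = ∅)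

def YSet (G : SimpleGraph (Fin n)) (X : Finset (Fin n)) : Finset (Fin n) :=
  Finset.univ.filter (fun i => i ∉ X ∪ ZSet G X ∧ Nbr G i ⊆ X ∪ ZSet G X)

def DSet (G : SimpleGraph (Fin n)) (X : Finset (Fin n)) : Finset (Fin n) :=
  X ∪ ZSet G X ∪ YSet G X


-- Auxiliary lemmas for the probabilistic argument

private lemma binom_one (p : ℝ) (B : Finset (Fin n)) :
    ∑ s ∈ B.powerset, p ^ s.card * (1 - p) ^ (B \ s).card = 1 := by
  have h := Finset.prod_add (fun _ : Fin n => p) (fun _ : Fin n => (1 : ℝ) - p) B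
  simp only [Finset.prod_const] at h
  rw [← h]
  have hpq : p + (1 - p) = 1 := by ring
  simp [hpq]

private lemma avoid_lemma (p : ℝ) (A : Finset (Fin n)) :
    ∑ s ∈ (univ : Finset (Fin n)).powerset,
      (p ^ s.card * (1 - p) ^ ((univ \ s).card)) * (if s ∩ A = ∅ then (1:ℝ) else 0)
      = (1 - p) ^ A.card := by
  simp only [mul_boole]
  rw [← Finset.sum_filter]
  have hfil : (univ : Finset (Fin n)).powerset.filter (fun s => s ∩ A = ∅)
      = (univ \ A).powerset := by
    ext s
    simp [Finset.subset_sdiff, ← Finset.disjoint_iff_inter_eq_empty]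
  rw [hfil]
  have hsplit : ∀ s ∈ (univ \ A).powerset,
      p ^ s.card * (1-p) ^ ((univ \ s).card)
        = (1-p) ^ A.card * (p ^ s.card * (1-p) ^ (((univ \ A) \ s).card)) := by
    intro s hs
    rw [Finset.mem_powerset] at hs
    have hxs : ∀ y ∈ s, y ∉ A := fun y hy => (Finset.mem_sdiff.mp (hs hy)).2
    have hset : (univ : Finset (Fin n)) \ s = A ∪ ((univ \ A) \ s) := by
      ext x
      simp only [Finset.mem_sdiff, Finset.mem_union, Finset.mem_univ, true_and]
      have := hxs x
      tauto
    have hdisj : Disjoint A ((univ \ A) \ s) :=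
      (Finset.disjoint_sdiff).mono_right (Finset.sdiff_subset)
    rw [hset, Finset.card_union_of_disjoint hdisj, pow_add]
    ring
  rw [Finset.sum_congr rfl hsplit, ← Finset.mul_sum, binom_one p (univ \ A), mul_one]

private lemma exists_good (G : SimpleGraph (Fin n)) {p : ℝ} (hp0 : 0 < p) (hp1 : p < 1) :
    ∃ s : Finset (Fin n), (s.card : ℝ) + ((ZSet G s).card : ℝ)
      ≤ n * p + ∑ i : Fin n, (1 - p) ^ (1 + (N2 G i).card) := by
  classical
  set w : Finset (Fin n) → ℝ := fun s => p ^ s.card * (1 - p) ^ ((univ \ s).card) with hw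
  have hwpos : ∀ s, 0 < w s := fun s =>
    mul_pos (pow_pos hp0 _) (pow_pos (by linarith) _)
  have hw1 : ∑ s ∈ (univ : Finset (Fin n)).powerset, w s = 1 := binom_one p univ
  have havoid : ∀ A : Finset (Fin n),
      ∑ s ∈ (univ : Finset (Fin n)).powerset, w s * (if s ∩ A = ∅ then (1:ℝ) else 0)
        = (1 - p) ^ A.card := fun A => avoid_lemma p A
  have hcard_s : ∀ s : Finset (Fin n),
      ((s.card : ℝ)) = ∑ i : Fin n, (if i ∈ s then (1:ℝ) else 0) := by
    intro s
    rw [Finset.sum_boole]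
    simp
  have hchi : ∀ (i : Fin n) (s : Finset (Fin n)),
      (if i ∈ s then (1:ℝ) else 0) = 1 - (if s ∩ {i} = ∅ then (1:ℝ) else 0) := by
    intro i s
    by_cases h : i ∈ s
    · simp [h, Finset.inter_singleton_of_mem h]
    · simp [h, Finset.inter_singleton_of_notMem h]
  have hnotmem : ∀ i : Fin n, i ∉ N2 G i := by
    intro i
    simp [N2, SimpleGraph.dist_self]
  have hZmem : ∀ (i : Fin n) (s : Finset (Fin n)),
      i ∈ ZSet G s ↔ s ∩ (insert i (N2 G i)) = ∅ := by
    intro i s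
    simp only [ZSet, Finset.mem_filter, Finset.mem_univ, true_and,
      Finset.eq_empty_iff_forall_notMem, Finset.mem_inter, Finset.mem_insert]
    constructor
    · rintro ⟨h1, h2⟩ x ⟨hx1, hx2⟩
      rcases hx2 with rfl | hx2
      · exact h1 hx1
      · exact h2 x ⟨hx2, hx1⟩
    · intro h
      refine ⟨fun hi => h i ⟨hi, Or.inl rfl⟩, fun x hx => h x ⟨hx.2, Or.inr hx.1⟩⟩
  have hA : ∑ s ∈ (univ : Finset (Fin n)).powerset, w s * (s.card : ℝ) = n * p := by
    have h1 : ∀ s ∈ (univ : Finset (Fin n)).powerset, w s * (s.card : ℝ)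
        = ∑ i : Fin n, (w s - w s * (if s ∩ {i} = ∅ then (1:ℝ) else 0)) := by
      intro s _
      rw [hcard_s s, Finset.mul_sum]
      refine Finset.sum_congr rfl fun i _ => ?_
      rw [hchi]
      ring
    rw [Finset.sum_congr rfl h1, Finset.sum_comm]
    have h2 : ∀ i : Fin n,
        ∑ s ∈ (univ : Finset (Fin n)).powerset,
          (w s - w s * (if s ∩ {i} = ∅ then (1:ℝ) else 0)) = p := by
      intro i
      rw [Finset.sum_sub_distrib, hw1, havoid {i}]
      simp
    rw [Finset.sum_congr rfl (fun i _ => h2 i)]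
    simp [mul_comm]
  have hB : ∑ s ∈ (univ : Finset (Fin n)).powerset, w s * ((ZSet G s).card : ℝ)
      = ∑ i : Fin n, (1 - p) ^ (1 + (N2 G i).card) := by
    have h1 : ∀ s ∈ (univ : Finset (Fin n)).powerset, w s * ((ZSet G s).card : ℝ)
        = ∑ i : Fin n, w s * (if s ∩ insert i (N2 G i) = ∅ then (1:ℝ) else 0) := by
      intro s _
      rw [hcard_s (ZSet G s), Finset.mul_sum]
      refine Finset.sum_congr rfl fun i _ => ?_
      congr 1
      exact if_congr (hZmem i s) rfl rfl
    rw [Finset.sum_congr rfl h1, Finset.sum_comm]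
    refine Finset.sum_congr rfl fun i _ => ?_
    rw [havoid (insert i (N2 G i))]
    congr 1
    rw [Finset.card_insert_of_notMem (hnotmem i)]
    omega
  have key : ∑ s ∈ (univ : Finset (Fin n)).powerset,
      w s * ((s.card : ℝ) + ((ZSet G s).card : ℝ))
      = n * p + ∑ i : Fin n, (1 - p) ^ (1 + (N2 G i).card) := by
    have : ∀ s ∈ (univ : Finset (Fin n)).powerset,
        w s * ((s.card : ℝ) + ((ZSet G s).card : ℝ))
        = w s * (s.card : ℝ) + w s * ((ZSet G s).card : ℝ) := by
      intro s _; ring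
    rw [Finset.sum_congr rfl this, Finset.sum_add_distrib, hA, hB]
  by_contra hcon
  push_neg at hcon
  have hne : ((univ : Finset (Fin n)).powerset).Nonempty := Finset.powerset_nonempty _
  have hlt : ∑ s ∈ (univ : Finset (Fin n)).powerset,
      w s * (n * p + ∑ i : Fin n, (1 - p) ^ (1 + (N2 G i).card))
      < ∑ s ∈ (univ : Finset (Fin n)).powerset,
        w s * ((s.card : ℝ) + ((ZSet G s).card : ℝ)) := by
    refine Finset.sum_lt_sum_of_nonempty hne fun s _ => ?_
    exact mul_lt_mul_of_pos_left (hcon s) (hwpos s)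
  rw [← Finset.sum_mul, hw1, one_mul, key] at hlt
  exact lt_irrefl _ hlt


theorem stmt5 {n : ℕ} (G : SimpleGraph (Fin n)) (hδh : 1 ≤ minHopDeg G)
    (hpm : ∃ M : SimpleGraph.Subgraph G, M.IsPerfectMatching)
    (hν : hopDomNum G ≤ matchingNum G) :
    (rhDomNum G : ℝ) ≤
      2 * n * (Real.log (minHopDeg G + 1) + 1) / (minHopDeg G + 1) := by
  classical
  obtain ⟨M, hM⟩ := hpm
  set d := minHopDeg G with hd
  have hd1 : 1 ≤ d := hδh
  have hDpos : (0:ℝ) < (d:ℝ) + 1 := by positivity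
  have hD2 : (2:ℝ) ≤ (d:ℝ) + 1 := by
    have : (1:ℝ) ≤ (d:ℝ) := by exact_mod_cast hd1
    linarith
  set p : ℝ := Real.log ((d:ℝ) + 1) / ((d:ℝ) + 1) with hp
  have hlogpos : 0 < Real.log ((d:ℝ) + 1) := Real.log_pos (by linarith)
  have hp0 : 0 < p := div_pos hlogpos hDpos
  have hp1 : p < 1 := by
    rw [hp, div_lt_one hDpos]
    have := Real.log_le_sub_one_of_pos hDpos
    linarith
  obtain ⟨s, hs⟩ := exists_good G hp0 hp1
  -- bound the sum term
  have hterm : ∀ i : Fin n, (1 - p) ^ (1 + (N2 G i).card) ≤ (1 - p) ^ (d + 1) := by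
    intro i
    apply pow_le_pow_of_le_one (by linarith) (by linarith)
    have hle : d ≤ (N2 G i).card := Nat.sInf_le ⟨i, rfl⟩
    omega
  have hqe : (1 - p) ^ (d + 1) ≤ ((d:ℝ) + 1)⁻¹ := by
    have h1 : (1 - p) ≤ Real.exp (-p) := by
      have := Real.add_one_le_exp (-p)
      linarith
    calc (1 - p) ^ (d + 1) ≤ (Real.exp (-p)) ^ (d + 1) :=
          pow_le_pow_left₀ (by linarith) h1 _
      _ = Real.exp (-(p * ((d:ℝ) + 1))) := by
          rw [← Real.exp_nat_mul]
          congr 1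
          push_cast
          ring
      _ = ((d:ℝ) + 1)⁻¹ := by
          have hpd : p * ((d:ℝ) + 1) = Real.log ((d:ℝ) + 1) := by
            rw [hp]
            field_simp
          rw [hpd, Real.exp_neg, Real.exp_log hDpos]
  have hsum : (s.card : ℝ) + ((ZSet G s).card : ℝ)
      ≤ (n:ℝ) * p + (n:ℝ) * ((d:ℝ) + 1)⁻¹ := by
    refine hs.trans ?_
    have : ∑ i : Fin n, (1 - p) ^ (1 + (N2 G i).card)
        ≤ ∑ _i : Fin n, ((d:ℝ) + 1)⁻¹ :=
      Finset.sum_le_sum fun i _ => (hterm i).trans hqe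
    simp only [Finset.sum_const, Finset.card_univ, Fintype.card_fin, nsmul_eq_mul] at this
    linarith
  -- the hop dominating set
  set s0 : Finset (Fin n) := s ∪ ZSet G s with hs0
  -- matching partner function
  have hMm := hM.1
  have hMs := hM.2
  set m : Fin n → Fin n := fun v => (hMm (hMs v)).choose with hm
  have hmadj : ∀ v, M.Adj v (m v) := fun v => (hMm (hMs v)).choose_spec.1
  have hmuniq : ∀ v y, M.Adj v y → y = m v := fun v y h => (hMm (hMs v)).choose_spec.2 y h
  have hmm : ∀ v, m (m v) = v := fun v => (hmuniq (m v) v (hmadj v).symm).symm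
  set S' : Finset (Fin n) := s0 ∪ s0.image m with hS'def
  have hS' : IsRestrainedHopDomSet G S' := by
    constructor
    · intro u hu
      have hu1 : u ∉ s0 := fun h => hu (Finset.mem_union_left _ h)
      have hu2 : u ∉ s := fun h => hu1 (Finset.mem_union_left _ h)
      have hu3 : u ∉ ZSet G s := fun h => hu1 (Finset.mem_union_right _ h)
      have hne : ¬ (N2 G u ∩ s = ∅) := by
        intro h
        exact hu3 (by simp [ZSet, hu2, h])
      obtain ⟨v, hv⟩ := Finset.nonempty_iff_ne_empty.mpr hne
      rw [Finset.mem_inter] at hv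
      refine ⟨v, Finset.mem_union_left _ (Finset.mem_union_left _ hv.2), ?_⟩
      have := hv.1
      simpa [N2] using this
    · intro u hu
      refine ⟨m u, ?_, (hmadj u).adj_sub⟩
      intro hmem
      rcases Finset.mem_union.mp hmem with h | h
      · exact hu (Finset.mem_union_right _ (Finset.mem_image.mpr ⟨m u, h, hmm u⟩))
      · obtain ⟨x, hx, hxe⟩ := Finset.mem_image.mp h
        have hux : x = u := by
          have := congrArg m hxe
          rwa [hmm, hmm] at this
        exact hu (Finset.mem_union_left _ (hux ▸ hx))
  have hrh : rhDomNum G ≤ S'.card := Nat.sInf_le ⟨S', hS', rfl⟩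
  have hcardS' : S'.card ≤ 2 * (s.card + (ZSet G s).card) := by
    have h1 : S'.card ≤ s0.card + (s0.image m).card := Finset.card_union_le _ _
    have h2 : (s0.image m).card ≤ s0.card := Finset.card_image_le
    have h3 : s0.card ≤ s.card + (ZSet G s).card := Finset.card_union_le _ _
    omega
  have hreal : (rhDomNum G : ℝ) ≤ 2 * ((s.card : ℝ) + ((ZSet G s).card : ℝ)) := by
    have : (rhDomNum G : ℝ) ≤ (S'.card : ℝ) := by exact_mod_cast hrh
    refine this.trans ?_
    have : (S'.card : ℝ) ≤ 2 * ((s.card : ℝ) + ((ZSet G s).card : ℝ)) := by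
      exact_mod_cast hcardS'
    exact this
  have hfinal : (rhDomNum G : ℝ) ≤ 2 * ((n:ℝ) * p + (n:ℝ) * ((d:ℝ) + 1)⁻¹) := by
    refine hreal.trans ?_
    linarith
  have heq : 2 * ((n:ℝ) * p + (n:ℝ) * ((d:ℝ) + 1)⁻¹)
      = 2 * (n:ℝ) * (Real.log ((d:ℝ) + 1) + 1) / ((d:ℝ) + 1) := by
    rw [hp]
    field_simp
  rw [heq] at hfinal
  exact hfinal
end
end

section
/- If G is a graph of order n with minimum degree δ ≥ 1, minimum hop degree δ_h ≥ 1, and n < δ·δ_h/(ln δ_h + 1), then γ_{rh}(G) ≤ ((ln(δ_h + 1) + 1)/(δ_h + 1)) · n. -/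
open Finset

noncomputable section
open scoped Classical

variable {n : ℕ}

open Finset
noncomputable section
open scoped Classical

section ProbAux
variable {α : Type*} [Fintype α] [DecidableEq α]

def wgt (p : ℝ) (X : Finset α) : ℝ :=
  (∏ _i ∈ X, p) * ∏ _i ∈ (univ \ X : Finset α), (1 - p)

lemma wgt_pos {p : ℝ} (hp0 : 0 < p) (hp1 : p < 1) (X : Finset α) : 0 < wgt p X := by
  unfold wgt
  apply mul_pos <;> apply Finset.prod_pos <;> intro i _ <;> linarith

lemma wgt_indicator (p : ℝ) (A : Finset α) :
    ∑ X ∈ (univ : Finset α).powerset, (if X ∩ A = ∅ then wgt p X else 0)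
      = (1 - p) ^ A.card := by
  rw [← Finset.sum_filter]
  have hset : (univ : Finset α).powerset.filter (fun X => X ∩ A = ∅)
      = ((univ : Finset α) \ A).powerset := by
    ext X
    simp [Finset.mem_powerset, Finset.subset_sdiff, ← Finset.disjoint_iff_inter_eq_empty]
  rw [hset]
  have h2 : ∀ X ∈ ((univ : Finset α) \ A).powerset,
      wgt p X = (∏ _i ∈ A, (1 - p)) *
        ((∏ _i ∈ X, p) * ∏ _i ∈ ((univ \ A : Finset α) \ X), (1 - p)) := by
    intro X hX
    rw [Finset.mem_powerset] at hX
    have hXA : ∀ i ∈ X, i ∉ A := fun i hi => (Finset.mem_sdiff.mp (hX hi)).2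
    have hsplit : (univ \ X : Finset α) = A ∪ ((univ \ A : Finset α) \ X) := by
      ext i
      simp only [Finset.mem_sdiff, Finset.mem_union, Finset.mem_univ, true_and]
      by_cases hA : i ∈ A
      · simp only [hA, true_or, iff_true]
        exact fun h => hXA i h hA
      · tauto
    have hdisj : Disjoint A ((univ \ A : Finset α) \ X) := by
      rw [Finset.disjoint_left]; intro i hi; simp [hi]
    unfold wgt
    rw [hsplit, Finset.prod_union hdisj]
    ring
  rw [Finset.sum_congr rfl h2, ← Finset.mul_sum, ← Finset.prod_add]
  have hone : p + (1 - p) = 1 := by ring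
  rw [hone]
  simp [Finset.prod_const]

lemma wgt_sum (p : ℝ) : ∑ X ∈ (univ : Finset α).powerset, wgt p X = 1 := by
  have h := wgt_indicator (α := α) p ∅
  simpa using h

lemma wgt_exp_count (p : ℝ) (B : α → Finset α) :
    ∑ X ∈ (univ : Finset α).powerset,
        wgt p X * (((univ : Finset α).filter (fun i => X ∩ B i = ∅)).card : ℝ)
      = ∑ i : α, (1 - p) ^ (B i).card := by
  calc ∑ X ∈ (univ : Finset α).powerset,
        wgt p X * (((univ : Finset α).filter (fun i => X ∩ B i = ∅)).card : ℝ)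
      = ∑ X ∈ (univ : Finset α).powerset, ∑ i : α,
          (if X ∩ B i = ∅ then wgt p X else 0) := by
        apply Finset.sum_congr rfl; intro X _
        rw [Finset.card_filter]; push_cast; rw [Finset.mul_sum]
        apply Finset.sum_congr rfl; intro i _
        split <;> simp
    _ = ∑ i : α, ∑ X ∈ (univ : Finset α).powerset,
          (if X ∩ B i = ∅ then wgt p X else 0) := Finset.sum_comm
    _ = ∑ i : α, (1 - p) ^ (B i).card := by
        apply Finset.sum_congr rfl; intro i _; exact wgt_indicator p (B i)

end ProbAux
theorem stmt10 {n : ℕ} (G : SimpleGraph (Fin n)) (hδ : 1 ≤ minDeg G)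
    (hδh : 1 ≤ minHopDeg G)
    (hn : (n : ℝ) < (minDeg G) * (minHopDeg G) / (Real.log (minHopDeg G) + 1)) :
    (rhDomNum G : ℝ) ≤
      (Real.log (minHopDeg G + 1) + 1) / (minHopDeg G + 1) * n := by
  classical
  set d : ℕ := minHopDeg G with hd
  set D : ℕ := minDeg G with hD
  have hdle : ∀ i, d ≤ hopDeg G i := fun i => ciInf_le (OrderBot.bddBelow _) i
  have hDle : ∀ i, D ≤ (Nbr G i).card := fun i => ciInf_le (OrderBot.bddBelow _) i
  have hd1 : (1:ℝ) ≤ (d:ℝ) := by exact_mod_cast hδh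
  set L : ℝ := Real.log ((d:ℝ) + 1) with hL
  have hLpos : 0 < L := Real.log_pos (by linarith)
  set p : ℝ := L / ((d:ℝ)+1) with hp
  have hdpos : (0:ℝ) < (d:ℝ)+1 := by linarith
  have hp0 : 0 < p := div_pos hLpos hdpos
  have hp1 : p < 1 := by
    rw [hp, div_lt_one hdpos]
    have := Real.log_lt_sub_one_of_pos (x := (d:ℝ)+1) (by linarith) (by linarith)
    rw [← hL] at this
    linarith
  have h1p0 : (0:ℝ) ≤ 1 - p := by linarith
  -- expectation of |X|
  have hEX : ∑ X ∈ (univ : Finset (Fin n)).powerset, wgt p X * (X.card : ℝ)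
      = n * p := by
    have h1 : ∀ X ∈ (univ : Finset (Fin n)).powerset,
        wgt p X * (X.card : ℝ)
        = wgt p X * n - wgt p X *
          ((univ.filter (fun i => X ∩ ({i} : Finset (Fin n)) = ∅)).card : ℝ) := by
      intro X _
      have h2 : univ.filter (fun i => X ∩ ({i} : Finset (Fin n)) = ∅) = univ \ X := by
        ext i
        simp only [Finset.mem_filter, Finset.mem_univ, true_and, Finset.mem_sdiff,
          Finset.eq_empty_iff_forall_notMem, Finset.mem_inter, Finset.mem_singleton]
        constructor
        · intro h hi; exact h i ⟨hi, rfl⟩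
        · rintro h j ⟨hj, rfl⟩; exact h hj
      have h3 : X.card ≤ (univ : Finset (Fin n)).card := Finset.card_le_univ X
      rw [h2, Finset.card_sdiff_of_subset (Finset.subset_univ X), Nat.cast_sub h3,
        Finset.card_univ, Fintype.card_fin]
      ring
    rw [Finset.sum_congr rfl h1, Finset.sum_sub_distrib, ← Finset.sum_mul, wgt_sum,
      wgt_exp_count p (fun i => ({i} : Finset (Fin n)))]
    simp only [Finset.card_singleton, pow_one, Finset.sum_const, Finset.card_univ,
      Fintype.card_fin, nsmul_eq_mul, one_mul]
    ring
  -- expectation of |Z|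
  have hiN2 : ∀ i : Fin n, i ∉ N2 G i := by
    intro i
    simp [N2, SimpleGraph.dist_self]
  have hZrw : ∀ X : Finset (Fin n),
      ZSet G X = univ.filter (fun i => X ∩ insert i (N2 G i) = ∅) := by
    intro X
    unfold ZSet
    apply Finset.filter_congr
    intro i _
    simp only [Finset.eq_empty_iff_forall_notMem, Finset.mem_inter, Finset.mem_insert,
      not_and, not_or]
    constructor
    · rintro ⟨h1, h2⟩ j hjX
      exact ⟨fun hji => h1 (hji ▸ hjX), fun hj2 => h2 j hj2 hjX⟩
    · intro h
      exact ⟨fun hiX => (h i hiX).1 rfl, fun j hj2 hjX => (h j hjX).2 hj2⟩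
  have hEZ : ∑ X ∈ (univ : Finset (Fin n)).powerset, wgt p X * (((ZSet G X).card) : ℝ)
      ≤ n * (1-p)^(d+1) := by
    have h1 : ∀ X ∈ (univ : Finset (Fin n)).powerset,
        wgt p X * (((ZSet G X).card) : ℝ)
        = wgt p X * ((univ.filter
            (fun i => X ∩ insert i (N2 G i) = ∅)).card : ℝ) := by
      intro X _; rw [hZrw X]
    rw [Finset.sum_congr rfl h1, wgt_exp_count p (fun i => insert i (N2 G i))]
    have h2 : ∀ i : Fin n, (1-p) ^ (insert i (N2 G i)).card ≤ (1-p)^(d+1) := by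
      intro i
      apply pow_le_pow_of_le_one h1p0 (by linarith)
      rw [Finset.card_insert_of_notMem (hiN2 i)]
      have := hdle i
      unfold hopDeg at this
      omega
    calc ∑ i : Fin n, (1-p) ^ (insert i (N2 G i)).card
        ≤ ∑ _i : Fin n, (1-p)^(d+1) := Finset.sum_le_sum (fun i _ => h2 i)
      _ = n * (1-p)^(d+1) := by
          simp [Finset.sum_const, Finset.card_univ, Fintype.card_fin]
  set c0 : ℝ := n * p + n * (1-p)^(d+1) with hc0
  -- pigeonhole
  have hsum : ∑ X ∈ (univ : Finset (Fin n)).powerset,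
        wgt p X * ((X.card : ℝ) + ((ZSet G X).card : ℝ))
      ≤ ∑ X ∈ (univ : Finset (Fin n)).powerset, wgt p X * c0 := by
    have hr : ∑ X ∈ (univ : Finset (Fin n)).powerset, wgt p X * c0 = c0 := by
      rw [← Finset.sum_mul, wgt_sum, one_mul]
    rw [hr]
    have : ∑ X ∈ (univ : Finset (Fin n)).powerset,
        wgt p X * ((X.card : ℝ) + ((ZSet G X).card : ℝ))
        = (∑ X ∈ (univ : Finset (Fin n)).powerset, wgt p X * (X.card : ℝ))
          + ∑ X ∈ (univ : Finset (Fin n)).powerset, wgt p X * (((ZSet G X).card) : ℝ) := by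
      rw [← Finset.sum_add_distrib]
      apply Finset.sum_congr rfl; intro X _; ring
    rw [this, hEX, hc0]
    linarith [hEZ]
  obtain ⟨X, -, hX⟩ := Finset.exists_le_of_sum_le
    (Finset.powerset_nonempty _) hsum
  have hvalX : (X.card : ℝ) + ((ZSet G X).card : ℝ) ≤ c0 :=
    le_of_mul_le_mul_left hX (wgt_pos hp0 hp1 X)
  set S : Finset (Fin n) := X ∪ ZSet G X with hS
  have hScard : (S.card : ℝ) ≤ c0 := by
    refine le_trans ?_ hvalX
    have := Finset.card_union_le X (ZSet G X)
    exact_mod_cast this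
  -- numeric bounds
  have hmulL : ((d:ℝ)+1) * p = L := by
    rw [hp]; field_simp
  have hpow : (1-p)^(d+1) ≤ ((d:ℝ)+1)⁻¹ := by
    have he : 1 - p ≤ Real.exp (-p) := by linarith [Real.add_one_le_exp (-p)]
    calc (1-p)^(d+1) ≤ Real.exp (-p) ^ (d+1) := pow_le_pow_left₀ h1p0 he _
      _ = Real.exp (((d+1 : ℕ) : ℝ) * (-p)) := by rw [Real.exp_nat_mul]
      _ = ((d:ℝ)+1)⁻¹ := by
          push_cast
          rw [show ((d:ℝ)+1) * (-p) = -L by rw [← hmulL]; ring]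
          rw [Real.exp_neg, Real.exp_log hdpos]
  have hc0RHS : c0 ≤ (L + 1)/((d:ℝ)+1) * n := by
    have h1 : c0 ≤ n * p + n * ((d:ℝ)+1)⁻¹ := by
      rw [hc0]
      have : (n:ℝ) * (1-p)^(d+1) ≤ n * ((d:ℝ)+1)⁻¹ :=
        mul_le_mul_of_nonneg_left hpow (by positivity)
      linarith
    have h2 : (n:ℝ) * p + n * ((d:ℝ)+1)⁻¹ = (L + 1)/((d:ℝ)+1) * n := by
      rw [hp]; field_simp
    linarith
  have hdpos' : (0:ℝ) < (d:ℝ) := by linarith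
  have hlogd : 0 ≤ Real.log (d:ℝ) := Real.log_nonneg hd1
  have hmono : (L + 1)/((d:ℝ)+1) ≤ (Real.log (d:ℝ) + 1)/(d:ℝ) := by
    rw [div_le_div_iff₀ hdpos hdpos']
    have hdiff : L - Real.log (d:ℝ) ≤ 1/(d:ℝ) := by
      rw [hL, ← Real.log_div (by linarith) (by linarith)]
      have h1 := Real.log_le_sub_one_of_pos (x := ((d:ℝ)+1)/(d:ℝ)) (by positivity)
      have heq : ((d:ℝ)+1)/(d:ℝ) - 1 = 1/(d:ℝ) := by field_simp; ring
      linarith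
    have hdd : (d:ℝ) * (1/(d:ℝ)) = 1 := by field_simp
    nlinarith [mul_le_mul_of_nonneg_left hdiff (le_of_lt hdpos')]
  have hld1 : (0:ℝ) < Real.log (d:ℝ) + 1 := by linarith
  have hnd : (n:ℝ) * (Real.log (d:ℝ) + 1) < (D:ℝ) * (d:ℝ) := (lt_div_iff₀ hld1).mp hn
  have hSD : (S.card : ℝ) < (D:ℝ) := by
    have h1 : (S.card : ℝ) ≤ (Real.log (d:ℝ) + 1)/(d:ℝ) * n :=
      le_trans hScard (le_trans hc0RHS (mul_le_mul_of_nonneg_right hmono (by positivity)))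
    have h2 : (Real.log (d:ℝ) + 1)/(d:ℝ) * n < (D:ℝ) := by
      rw [div_mul_eq_mul_div, div_lt_iff₀ hdpos']
      linarith [hnd, mul_comm (Real.log (d:ℝ) + 1) (n:ℝ)]
    linarith
  have hSDnat : S.card < D := by exact_mod_cast hSD
  -- S is a restrained hop dominating set
  have hdom : IsHopDomSet G S := by
    intro u hu
    have hu1 : u ∉ X := fun h => hu (Finset.mem_union_left _ h)
    have hu2 : u ∉ ZSet G X := fun h => hu (Finset.mem_union_right _ h)
    have h3 : ¬(u ∉ X ∧ N2 G u ∩ X = ∅) := by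
      intro h
      exact hu2 (Finset.mem_filter.mpr ⟨Finset.mem_univ u, h⟩)
    have hne : N2 G u ∩ X ≠ ∅ := fun h => h3 ⟨hu1, h⟩
    obtain ⟨v, hv⟩ := Finset.nonempty_iff_ne_empty.mpr hne
    rw [Finset.mem_inter] at hv
    refine ⟨v, Finset.mem_union_left _ hv.2, ?_⟩
    have h4 := hv.1
    simp only [N2, Finset.mem_filter, Finset.mem_univ, true_and] at h4
    exact h4
  have hrest : ∀ u, u ∉ S → ∃ v, v ∉ S ∧ G.Adj u v := by
    intro u _
    have h1 : S.card < (Nbr G u).card := lt_of_lt_of_le hSDnat (hDle u)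
    have h2 : (Nbr G u \ S).Nonempty := by
      rw [← Finset.card_pos]
      have := Finset.le_card_sdiff S (Nbr G u)
      omega
    obtain ⟨v, hv⟩ := h2
    rw [Finset.mem_sdiff] at hv
    refine ⟨v, hv.2, ?_⟩
    have h3 := hv.1
    simp only [Nbr, Finset.mem_filter, Finset.mem_univ, true_and] at h3
    exact h3
  have hrh : rhDomNum G ≤ S.card :=
    Nat.sInf_le ⟨S, ⟨hdom, hrest⟩, rfl⟩
  calc (rhDomNum G : ℝ) ≤ (S.card : ℝ) := by exact_mod_cast hrh
    _ ≤ c0 := hScard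
    _ ≤ (L + 1)/((d:ℝ)+1) * n := hc0RHS
end
end
end
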